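/- Let a, b > 0 and τ, ν ∈ (0,1) with ν ≤ min{τ,1-τ} or ν ≥ max{τ,1-τ}. Then ((a∇b)/H_ν(a,b))^{1/(ν(1-ν))} ≤ ((a∇b)/H_τ(a,b))^{1/(τ(1-τ))}. -/

import Mathlib

open Real Set in
private lemma heinz_aux_l1 : ∀ x : ℝ, 0 ≤ x → Real.sinh x ≤ x * Real.cosh x := by
  have hmono : MonotoneOn (fun x : ℝ => x * Real.cosh x - Real.sinh x) (Ici 0) := by
    apply monotoneOn_of_deriv_nonneg (convex_Ici 0)
    · fun_prop
    · intro x hx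
      exact (((hasDerivAt_id x).mul (Real.hasDerivAt_cosh x)).sub
        (Real.hasDerivAt_sinh x)).differentiableAt.differentiableWithinAt
    · intro x hx
      rw [interior_Ici, mem_Ioi] at hx
      have hd : HasDerivAt (fun x : ℝ => x * Real.cosh x - Real.sinh x)
          (1 * Real.cosh x + x * Real.sinh x - Real.cosh x) x :=
        ((hasDerivAt_id x).mul (Real.hasDerivAt_cosh x)).sub (Real.hasDerivAt_sinh x)
      rw [hd.deriv]
      nlinarith [Real.sinh_pos_iff.2 hx]
  intro x hx
  have := hmono (self_mem_Ici (a := (0:ℝ))) hx hx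
  simp at this
  linarith

open Real Set in
private lemma heinz_aux_l2 : ∀ d e : ℝ, 0 ≤ d → d ≤ e → e * Real.sinh d ≤ d * Real.sinh e := by
  have hmono : MonotoneOn (fun x : ℝ => Real.sinh x / x) (Ioi 0) := by
    apply monotoneOn_of_deriv_nonneg (convex_Ioi 0)
    · intro x hx
      exact (Real.continuous_sinh.continuousOn.div continuousOn_id
        (fun y hy => ne_of_gt hy)) x hx
    · intro x hx
      rw [interior_Ioi, mem_Ioi] at hx
      exact ((Real.hasDerivAt_sinh x).div (hasDerivAt_id x) hx.ne').differentiableAt.differentiableWithinAt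
    · intro x hx
      rw [interior_Ioi, mem_Ioi] at hx
      have hd : HasDerivAt (fun x : ℝ => Real.sinh x / x)
          ((Real.cosh x * x - Real.sinh x * 1) / x ^ 2) x :=
        (Real.hasDerivAt_sinh x).div (hasDerivAt_id x) hx.ne'
      rw [hd.deriv]
      have := heinz_aux_l1 x hx.le
      apply div_nonneg (by nlinarith) (by positivity)
  intro d e hd hde
  rcases eq_or_lt_of_le hd with h0 | h0
  · simp [← h0]
  · have he : 0 < e := lt_of_lt_of_le h0 hde
    have := hmono (mem_Ioi.2 h0) (mem_Ioi.2 he) hde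
    rw [div_le_div_iff₀ h0 he] at this
    linarith

open Real Set in
private lemma heinz_aux_l3 : ∀ u v : ℝ, 0 ≤ u → u ≤ v →
    u * (Real.sinh v * Real.cosh u) ≤ v * (Real.sinh u * Real.cosh v) := by
  intro u v hu huv
  have key := heinz_aux_l2 (v - u) (v + u) (by linarith) (by linarith)
  have h1 : Real.sinh (v + u) = Real.sinh v * Real.cosh u + Real.cosh v * Real.sinh u :=
    Real.sinh_add v u
  have h2 : Real.sinh (v - u) = Real.sinh v * Real.cosh u - Real.cosh v * Real.sinh u :=
    Real.sinh_sub v u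
  nlinarith [key, h1, h2]

open Real Set in
private lemma heinz_aux_concave (S : ℝ) (hS : 0 ≤ S) :
    ConcaveOn ℝ (Ici 0) (fun x : ℝ => Real.log (Real.cosh (S * Real.sqrt x))) := by
  rcases eq_or_lt_of_le hS with h0 | h0
  · simp only [← h0, zero_mul, Real.cosh_zero, Real.log_one]
    exact concaveOn_const 0 (convex_Ici 0)
  have hderiv : ∀ x : ℝ, 0 < x → HasDerivAt (fun x : ℝ => Real.log (Real.cosh (S * Real.sqrt x)))
      (Real.sinh (S * Real.sqrt x) * (S * (1 / (2 * Real.sqrt x))) / Real.cosh (S * Real.sqrt x)) x := by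
    intro x hx
    have h1 : HasDerivAt (fun x : ℝ => S * Real.sqrt x) (S * (1 / (2 * Real.sqrt x))) x :=
      (Real.hasDerivAt_sqrt hx.ne').const_mul S
    have h2 : HasDerivAt (fun x : ℝ => Real.cosh (S * Real.sqrt x))
        (Real.sinh (S * Real.sqrt x) * (S * (1 / (2 * Real.sqrt x)))) x :=
      h1.cosh
    exact h2.log (Real.cosh_pos _).ne'
  apply AntitoneOn.concaveOn_of_deriv (convex_Ici 0)
  · exact ContinuousOn.log
      ((Real.continuous_cosh.comp (continuous_const.mul Real.continuous_sqrt)).continuousOn)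
      (fun x _ => (Real.cosh_pos _).ne')
  · intro x hx
    rw [interior_Ici, mem_Ioi] at hx
    exact (hderiv x hx).differentiableAt.differentiableWithinAt
  · intro x hx y hy hxy
    rw [interior_Ici, mem_Ioi] at hx hy
    rw [(hderiv x hx).deriv, (hderiv y hy).deriv]
    set u := S * Real.sqrt x with hu
    set v := S * Real.sqrt y with hv
    have hsx : 0 < Real.sqrt x := Real.sqrt_pos.2 hx
    have hsy : 0 < Real.sqrt y := Real.sqrt_pos.2 hy
    have hu0 : 0 < u := by positivity
    have hv0 : 0 < v := by positivity
    have huv : u ≤ v := by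
      apply mul_le_mul_of_nonneg_left (Real.sqrt_le_sqrt hxy) h0.le
    have key := heinz_aux_l3 u v hu0.le huv
    have key2 : Real.sqrt x * (Real.sinh v * Real.cosh u) ≤ Real.sqrt y * (Real.sinh u * Real.cosh v) := by
      refine le_of_mul_le_mul_left ?_ h0
      calc S * (Real.sqrt x * (Real.sinh v * Real.cosh u)) = u * (Real.sinh v * Real.cosh u) := by
              rw [hu]; ring
        _ ≤ v * (Real.sinh u * Real.cosh v) := key
        _ = S * (Real.sqrt y * (Real.sinh u * Real.cosh v)) := by rw [hv]; ring
    have e1 : Real.sinh v * (S * (1 / (2 * Real.sqrt y))) / Real.cosh v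
        = (S * Real.sinh v) / (2 * (Real.sqrt y * Real.cosh v)) := by
      field_simp
    have e2 : Real.sinh u * (S * (1 / (2 * Real.sqrt x))) / Real.cosh u
        = (S * Real.sinh u) / (2 * (Real.sqrt x * Real.cosh u)) := by
      field_simp
    rw [e1, e2, div_le_div_iff₀ (by positivity) (by positivity)]
    have hcu := Real.cosh_pos (x := u)
    have hcv := Real.cosh_pos (x := v)
    nlinarith [key2, Real.sinh_pos_iff.2 hu0, Real.sinh_pos_iff.2 hv0]

theorem heinz_multiplicative_comparison (a b ν τ : ℝ) (ha : 0 < a) (hb : 0 < b)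
    (hν : ν ∈ Set.Ioo (0:ℝ) 1) (hτ : τ ∈ Set.Ioo (0:ℝ) 1)
    (h : ν ≤ min τ (1 - τ) ∨ max τ (1 - τ) ≤ ν) :
    (((a + b) / 2) / ((a ^ ν * b ^ (1 - ν) + a ^ (1 - ν) * b ^ ν) / 2)) ^ (1 / (ν * (1 - ν))) ≤
    (((a + b) / 2) / ((a ^ τ * b ^ (1 - τ) + a ^ (1 - τ) * b ^ τ) / 2)) ^ (1 / (τ * (1 - τ))) := by
  open Real Set in
  obtain ⟨hν0, hν1⟩ := hν
  obtain ⟨hτ0, hτ1⟩ := hτ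
  set la := Real.log a with hla
  set lb := Real.log b with hlb
  set G := (la + lb) / 2 with hG
  set s0 := (la - lb) / 2 with hs0
  set S := |s0| with hS
  set m := fun x : ℝ => Real.log (Real.cosh (S * Real.sqrt x)) with hm
  have hsum : ∀ t : ℝ, a ^ t * b ^ (1 - t) + a ^ (1 - t) * b ^ t
      = 2 * Real.exp G * Real.cosh ((2 * t - 1) * s0) := by
    intro t
    rw [Real.rpow_def_of_pos ha, Real.rpow_def_of_pos hb, Real.rpow_def_of_pos ha,
      Real.rpow_def_of_pos hb, ← Real.exp_add, ← Real.exp_add, Real.cosh_eq]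
    have h1 : la * t + lb * (1 - t) = G + (2 * t - 1) * s0 := by rw [hG, hs0]; ring
    have h2 : la * (1 - t) + lb * t = G - (2 * t - 1) * s0 := by rw [hG, hs0]; ring
    rw [h1, h2, Real.exp_add, Real.exp_sub, Real.exp_neg]
    have := Real.exp_ne_zero ((2 * t - 1) * s0)
    field_simp
  have hab : a + b = 2 * Real.exp G * Real.cosh s0 := by
    have ha' : a = Real.exp (G + s0) := by
      rw [hG, hs0]; rw [show (la + lb) / 2 + (la - lb) / 2 = la by ring, hla, Real.exp_log ha]
    have hb' : b = Real.exp (G - s0) := by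
      rw [hG, hs0]; rw [show (la + lb) / 2 - (la - lb) / 2 = lb by ring, hlb, Real.exp_log hb]
    rw [ha', hb', Real.cosh_eq, Real.exp_add, Real.exp_sub, Real.exp_neg]
    have := Real.exp_ne_zero s0
    field_simp
  have hR : ∀ t : ℝ, ((a + b) / 2) / ((a ^ t * b ^ (1 - t) + a ^ (1 - t) * b ^ t) / 2)
      = Real.cosh s0 / Real.cosh ((2 * t - 1) * s0) := by
    intro t
    rw [hab, hsum t]
    have h1 := Real.exp_ne_zero G
    have h2 := (Real.cosh_pos (x := (2 * t - 1) * s0)).ne'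
    field_simp
  have hcosh1 : Real.cosh s0 = Real.cosh (S * Real.sqrt 1) := by
    rw [Real.sqrt_one, mul_one, hS, Real.cosh_abs]
  have hcoshw : ∀ t : ℝ, Real.cosh ((2 * t - 1) * s0)
      = Real.cosh (S * Real.sqrt ((2 * t - 1) ^ 2)) := by
    intro t
    rw [Real.sqrt_sq_eq_abs, hS, ← abs_mul, Real.cosh_abs, mul_comm]
  set p := (2 * τ - 1) ^ 2 with hp
  set q := (2 * ν - 1) ^ 2 with hq
  clear_value p q
  have hp0 : (0:ℝ) ≤ p := hp ▸ sq_nonneg _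
  have hq0 : (0:ℝ) ≤ q := hq ▸ sq_nonneg _
  have hp1 : p < 1 := by rw [hp]; nlinarith
  have hq1 : q < 1 := by rw [hq]; nlinarith
  have hpq : p ≤ q := by
    rcases h with h | h
    · have h1 : ν ≤ τ := le_trans h (min_le_left _ _)
      have h2 : ν ≤ 1 - τ := le_trans h (min_le_right _ _)
      rw [hp, hq]; nlinarith
    · have h1 : τ ≤ ν := le_trans (le_max_left _ _) h
      have h2 : 1 - τ ≤ ν := le_trans (le_max_right _ _) h
      rw [hp, hq]; nlinarith
  have hne : (1:ℝ) - p ≠ 0 := by linarith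
  have hc := heinz_aux_concave S (abs_nonneg _)
  have chord : (1 - p) * (m 1 - m q) ≤ (1 - q) * (m 1 - m p) := by
    have hmem1 : (1:ℝ) ∈ Set.Ici (0:ℝ) := by norm_num
    have hmemp : p ∈ Set.Ici (0:ℝ) := hp0
    have hcoef1 : (0:ℝ) ≤ (1 - q) / (1 - p) := by
      apply div_nonneg <;> linarith
    have hcoef2 : (0:ℝ) ≤ (q - p) / (1 - p) := by
      apply div_nonneg <;> linarith
    have hcoefsum : (1 - q) / (1 - p) + (q - p) / (1 - p) = 1 := by
      rw [← add_div]
      rw [show (1 - q) + (q - p) = 1 - p by ring, div_self hne]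
    have key := hc.2 hmemp hmem1 hcoef1 hcoef2 hcoefsum
    have hcomb : ((1 - q) / (1 - p)) • p + ((q - p) / (1 - p)) • (1:ℝ) = q := by
      simp only [smul_eq_mul, mul_one]
      rw [div_mul_eq_mul_div, ← add_div, div_eq_iff hne]
      ring
    rw [hcomb] at key
    simp only [smul_eq_mul, ← hm] at key
    have hp1' : (0:ℝ) < 1 - p := by linarith
    have key2 := mul_le_mul_of_nonneg_left key hp1'.le
    have e1 : (1 - p) * ((1 - q) / (1 - p) * m p + (q - p) / (1 - p) * m 1)
        = (1 - q) * m p + (q - p) * m 1 := by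
      field_simp
    rw [e1] at key2
    linarith
  have hRν := hR ν
  have hRτ := hR τ
  rw [hRν, hRτ, hcosh1, hcoshw ν, hcoshw τ, ← hq, ← hp]
  have hbase : ∀ x : ℝ, (0:ℝ) < Real.cosh (S * Real.sqrt 1) / Real.cosh (S * Real.sqrt x) := by
    intro x
    exact div_pos (Real.cosh_pos _) (Real.cosh_pos _)
  rw [Real.rpow_def_of_pos (hbase q), Real.rpow_def_of_pos (hbase p), Real.exp_le_exp,
    Real.log_div (Real.cosh_pos _).ne' (Real.cosh_pos _).ne',
    Real.log_div (Real.cosh_pos _).ne' (Real.cosh_pos _).ne']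
  have hνq : ν * (1 - ν) = (1 - q) / 4 := by rw [hq]; ring
  have hτp : τ * (1 - τ) = (1 - p) / 4 := by rw [hp]; ring
  rw [hνq, hτp, one_div_div, one_div_div, ← mul_div_assoc, ← mul_div_assoc,
    div_le_div_iff₀ (by linarith) (by linarith)]
  have hm1 : Real.log (Real.cosh (S * Real.sqrt 1)) = m 1 := by rw [hm]
  have hmq : Real.log (Real.cosh (S * Real.sqrt q)) = m q := by rw [hm]
  have hmp : Real.log (Real.cosh (S * Real.sqrt p)) = m p := by rw [hm]
  rw [hm1, hmq, hmp]
  nlinarith [chord]
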